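/- arXiv:2309.11624 — 2 statements merged into one kernel-verified Lean document; each statement's English description precedes it below -/
import Mathlib

section
/- Let Q be a finite quiver and a, b arrows of Q. Then b is a subpath of ω_a if and only if ω_a = ω_b. -/
namespace UMPPaper

variable {V A : Type}

/-- A (non-trivial) path in the quiver with source/target maps `s`, `t`,
represented as a nonempty list of composable arrows. -/
def IsPath (s t : A → V) (p : List A) : Prop :=
  p ≠ [] ∧ p.Chain' (fun a b => t a = s b)

/-- `Q` is a cyclic quiver: there is a repetition-free path through all arrows
(and all vertices) whose target equals its source. -/
def IsCyclicQuiver (s t : A → V) : Prop :=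
  ∃ p : List A, IsPath s t p ∧ p.Nodup ∧ (∀ a : A, a ∈ p) ∧
    (∀ v : V, ∃ a ∈ p, s a = v ∨ t a = v) ∧
    (∃ x ∈ p.getLast?, ∃ y ∈ p.head?, t x = s y)

/-- `Φ_a`: paths containing the arrow `a` as a subpath, all of whose
intermediate vertices have exactly one incoming and exactly one outgoing arrow. -/
def Phi (s t : A → V) (a : A) : Set (List A) :=
  {p | IsPath s t p ∧ [a] <:+: p ∧
    ∀ x ∈ p.dropLast, (∃! b : A, s b = t x) ∧ (∃! b : A, t b = t x)}

/-- Specification of the assignment `a ↦ ω_a`. -/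
def OmegaSpec (s t : A → V) (ω : A → List A) : Prop :=
  (IsCyclicQuiver s t → ∃ p : List A, IsPath s t p ∧ p.Nodup ∧ (∀ a : A, a ∈ p) ∧
      (∃ x ∈ p.getLast?, ∃ y ∈ p.head?, t x = s y) ∧ ∀ a : A, ω a = p) ∧
  (¬ IsCyclicQuiver s t →
    ∀ a : A, ω a ∈ Phi s t a ∧ ∀ q ∈ Phi s t a, q.length ≤ (ω a).length)

/-- The quiver is connected (as an undirected graph on vertices). -/
def QConnected (s t : A → V) : Prop :=
  ∀ u v : V, Relation.ReflTransGen
    (fun x y => ∃ a : A, (s a = x ∧ t a = y) ∨ (s a = y ∧ t a = x)) u v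

/-- Auxiliary: a list of composable arrows whose intermediate vertices have unique
in/out arrows (the `Phi` condition without the "contains `a`" and nonemptiness parts). -/
def Good (s t : A → V) (p : List A) : Prop :=
  p.Chain' (fun a b => t a = s b) ∧
    ∀ x ∈ p.dropLast, (∃! c : A, s c = t x) ∧ (∃! c : A, t c = t x)

lemma dropLast_mid (l₁ l₂ : List A) (x : A) :
    (l₁ ++ x :: l₂).dropLast = l₁ ++ (x :: l₂).dropLast :=
  List.dropLast_append_of_ne_nil (by simp)

/-- Forward determinism: the parts after a common arrow are prefix-comparable. -/
lemma fwd (s t : A → V) : ∀ (v v' u u' : List A) (x : A),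
    Good s t (u ++ x :: v) → Good s t (u' ++ x :: v') → v <+: v' ∨ v' <+: v := by
  intro v
  induction v with
  | nil => intro v' u u' x _ _; exact Or.inl (List.nil_prefix ..)
  | cons c v2 ih =>
    intro v' u u' x hp hq
    cases v' with
    | nil => exact Or.inr (List.nil_prefix ..)
    | cons d v2' =>
      have hxmem : x ∈ (u ++ x :: c :: v2).dropLast := by
        rw [dropLast_mid]; simp
      obtain ⟨w, -, huniq⟩ := (hp.2 x hxmem).1
      have hc : t x = s c := by
        have h2 : List.Chain' (fun a b => t a = s b) [x, c] :=
          hp.1.infix ⟨u, v2, by simp⟩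
        exact (List.isChain_cons_cons.mp h2).1
      have hd : t x = s d := by
        have h2 : List.Chain' (fun a b => t a = s b) [x, d] :=
          hq.1.infix ⟨u', v2', by simp⟩
        exact (List.isChain_cons_cons.mp h2).1
      have hcd : c = d := by rw [huniq c hc.symm, huniq d hd.symm]
      subst hcd
      have hp' : Good s t ((u ++ [x]) ++ c :: v2) := by simpa using hp
      have hq' : Good s t ((u' ++ [x]) ++ c :: v2') := by simpa using hq
      rcases ih v2' (u ++ [x]) (u' ++ [x]) c hp' hq' with h | h
      · exact Or.inl (List.cons_prefix_cons.mpr ⟨rfl, h⟩)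
      · exact Or.inr (List.cons_prefix_cons.mpr ⟨rfl, h⟩)

/-- Backward determinism: the parts before a common arrow are suffix-comparable. -/
lemma bwd (s t : A → V) : ∀ (u u' v v' : List A) (x : A),
    Good s t (u ++ x :: v) → Good s t (u' ++ x :: v') → u <:+ u' ∨ u' <:+ u := by
  intro u
  induction u using List.reverseRecOn with
  | nil => intros; exact Or.inl (List.nil_suffix ..)
  | append_singleton u0 c ih =>
    intro u' v v' x hp hq
    rcases u'.eq_nil_or_concat with rfl | ⟨u0', d, rfl⟩
    · exact Or.inr (List.nil_suffix ..)
    · rw [List.concat_eq_append] at *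
      have hcmem : c ∈ ((u0 ++ [c]) ++ x :: v).dropLast := by
        rw [dropLast_mid]; simp
      obtain ⟨w, -, huniq⟩ := (hp.2 c hcmem).2
      have hc : t c = s x := by
        have h2 : List.Chain' (fun a b => t a = s b) [c, x] :=
          hp.1.infix ⟨u0, v, by simp⟩
        exact (List.isChain_cons_cons.mp h2).1
      have hd : t d = s x := by
        have h2 : List.Chain' (fun a b => t a = s b) [d, x] :=
          hq.1.infix ⟨u0', v', by simp⟩
        exact (List.isChain_cons_cons.mp h2).1
      have hcd : c = d := by rw [huniq c rfl, huniq d (by show t d = t c; rw [hd, hc])]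
      subst hcd
      have hp' : Good s t (u0 ++ c :: (x :: v)) := by simpa using hp
      have hq' : Good s t (u0' ++ c :: (x :: v')) := by simpa using hq
      rcases ih u0' (x :: v) (x :: v') c hp' hq' with h | h
      · obtain ⟨w2, hw2⟩ := h
        exact Or.inl ⟨w2, by rw [← List.append_assoc, hw2]⟩
      · obtain ⟨w2, hw2⟩ := h
        exact Or.inr ⟨w2, by rw [← List.append_assoc, hw2]⟩

/-- Mixing two good paths through a common arrow yields a good path. -/
lemma mix {s t : A → V} {u v u' v' : List A} {b : A}
    (hp : Good s t (u ++ b :: v)) (hq : Good s t (u' ++ b :: v')) :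
    Good s t (u' ++ b :: v) := by
  constructor
  · rw [show u' ++ b :: v = (u' ++ [b]) ++ v by simp, List.Chain', List.isChain_append]
    refine ⟨hq.1.prefix ⟨v', by simp⟩, hp.1.suffix ⟨u ++ [b], by simp⟩, ?_⟩
    intro x hx y hy
    have hx' : b = x := by simpa using hx
    subst hx'
    have hbv : List.Chain' (fun a b => t a = s b) (b :: v) := hp.1.suffix ⟨u, rfl⟩
    cases v with
    | nil => simp at hy
    | cons y0 v0 =>
      have : y0 = y := by simpa using hy
      subst this
      exact (List.isChain_cons_cons.mp hbv).1
  · intro x hx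
    rw [dropLast_mid] at hx
    rcases List.mem_append.mp hx with hx | hx
    · exact hq.2 x (by rw [dropLast_mid]; exact List.mem_append_left _ hx)
    · exact hp.2 x (by rw [dropLast_mid]; exact List.mem_append_right _ hx)

lemma infix_of_parts {u U v W : List A} {b : A} (hu : u <:+ U) (hv : v <+: W) :
    u ++ b :: v <:+: U ++ b :: W := by
  obtain ⟨w, rfl⟩ := hu
  obtain ⟨z, rfl⟩ := hv
  exact ⟨w, z, by simp⟩

lemma eq_of_infix_max {s t : A → V} {c : A} {p m : List A}
    (hp : p ∈ Phi s t c) (hmax : ∀ q ∈ Phi s t c, q.length ≤ p.length)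
    (hg : Good s t m) (hinf : p <:+: m) : p = m := by
  have hm : m ∈ Phi s t c := by
    refine ⟨⟨?_, hg.1⟩, hp.2.1.trans hinf, hg.2⟩
    intro h
    rw [h] at hinf
    exact hp.1.1 (List.sublist_nil.mp hinf.sublist)
  exact hinf.sublist.eq_of_length (le_antisymm hinf.length_le (hmax m hm))

/-- for arrows `a, b` of a finite (connected) quiver, `b` is a subpath of
`ω_a` if and only if `ω_a = ω_b`. -/
theorem stmt_2 [Fintype V] [Fintype A] (s t : A → V)
    (hconn : QConnected s t) (ω : A → List A) (hω : OmegaSpec s t ω) (a b : A) :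
    [b] <:+: ω a ↔ ω a = ω b := by
  by_cases hc : IsCyclicQuiver s t
  · obtain ⟨p, hpath, hnd, hall, hcyc, hωp⟩ := hω.1 hc
    constructor
    · intro _; rw [hωp a, hωp b]
    · intro _
      rw [hωp a]
      obtain ⟨l, r, hl⟩ := List.append_of_mem (hall b)
      exact ⟨l, r, by simp [hl]⟩
  · obtain ⟨ha, hamax⟩ := hω.2 hc a
    obtain ⟨hb, hbmax⟩ := hω.2 hc b
    constructor
    · intro hba
      obtain ⟨u, v, huv⟩ := hba
      obtain ⟨u', v', huv'⟩ := hb.2.1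
      have heqa : ω a = u ++ b :: v := by rw [← huv]; simp
      have heqb : ω b = u' ++ b :: v' := by rw [← huv']; simp
      have hga : Good s t (u ++ b :: v) := by
        rw [← heqa]; exact ⟨ha.1.2, ha.2.2⟩
      have hgb : Good s t (u' ++ b :: v') := by
        rw [← heqb]; exact ⟨hb.1.2, hb.2.2⟩
      have hamax' : ∀ q ∈ Phi s t a, q.length ≤ (u ++ b :: v).length := by
        rw [← heqa]; exact hamax
      have hbmax' : ∀ q ∈ Phi s t b, q.length ≤ (u' ++ b :: v').length := by
        rw [← heqb]; exact hbmax
      have hpa : u ++ b :: v ∈ Phi s t a := by rw [← heqa]; exact ha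
      have hpb : u' ++ b :: v' ∈ Phi s t b := by rw [← heqb]; exact hb
      rw [heqa, heqb]
      rcases fwd s t v v' u u' b hga hgb with hv | hv <;>
        rcases bwd s t u u' v v' b hga hgb with hu | hu
      · -- v <+: v', u <:+ u' : m = ω b
        exact eq_of_infix_max hpa hamax' hgb (infix_of_parts hu hv)
      · -- v <+: v', u' <:+ u : m = u ++ b :: v'
        have hgm : Good s t (u ++ b :: v') := mix hgb hga
        have h1 := eq_of_infix_max hpa hamax' hgm
          (infix_of_parts (List.suffix_refl u) hv)
        have h2 := eq_of_infix_max hpb hbmax' hgm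
          (infix_of_parts hu (List.prefix_refl v'))
        rw [h1, h2]
      · -- v' <+: v, u <:+ u' : m = u' ++ b :: v
        have hgm : Good s t (u' ++ b :: v) := mix hga hgb
        have h1 := eq_of_infix_max hpa hamax' hgm
          (infix_of_parts hu (List.prefix_refl v))
        have h2 := eq_of_infix_max hpb hbmax' hgm
          (infix_of_parts (List.suffix_refl u') hv)
        rw [h1, h2]
      · -- v' <+: v, u' <:+ u : m = ω a
        exact (eq_of_infix_max hpb hbmax' hga (infix_of_parts hu hv)).symm
    · intro h
      rw [h]
      exact hb.2.1

end UMPPaper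
end

section
/- Let A = kQ/I be a special multiserial and locally monomial algebra, and N a weakly connected component of G_{Q,I}. If S_N = ∅ (there are no relations of R_N other than the quadratic relations of the form (last arrow of ω_a)·(first arrow of ω_b) in I_N), then the set of maximal paths of A_N is exactly {ω(N) + I_N}; in particular A_N is a UMP algebra. -/
namespace UMPPaper

variable {V A : Type}

/-! ## Bound quiver algebras: the ideal `I` is abstracted by the set `Zi` of paths lying in it. -/

/-- The set of paths lying in a (two-sided) ideal is closed under taking super-paths. -/
def ZeroClosed (Zi : List A → Prop) : Prop :=
  ∀ p q : List A, Zi p → p <:+: q → Zi q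

/-- Path-level content of admissibility: `I ⊆ R², Rᵐ ⊆ I` for some `m ≥ 2`. -/
def Admissible (s t : A → V) (Zi : List A → Prop) : Prop :=
  (∀ p : List A, Zi p → 2 ≤ p.length) ∧
  ∃ m : ℕ, 2 ≤ m ∧ ∀ p : List A, IsPath s t p → m ≤ p.length → Zi p

/-- `t(p) = s(q)` and the junction (last arrow of `p`)·(first arrow of `q`) is not in `I`. -/
def JunctionOK (s t : A → V) (Zi : List A → Prop) (p q : List A) : Prop :=
  ∃ x ∈ p.getLast?, ∃ y ∈ q.head?, t x = s y ∧ ¬ Zi [x, y]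

/-- Directed edge of the ramifications graph, on path-vertices. -/
def REdgeP (s t : A → V) (Zi : List A → Prop) (p q : List A) : Prop :=
  p ≠ q ∧ JunctionOK s t Zi p q

/-- Directed edge `ω_a → ω_b` of the ramifications graph `G_{Q,I}`. -/
def REdge (s t : A → V) (Zi : List A → Prop) (ω : A → List A) (a b : A) : Prop :=
  REdgeP s t Zi (ω a) (ω b)

/-- Undirected adjacency (including equality of vertices) used for weak connectivity. -/
def RAdj (s t : A → V) (Zi : List A → Prop) (ω : A → List A) (a b : A) : Prop :=
  ω a = ω b ∨ REdge s t Zi ω a b ∨ REdge s t Zi ω b a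

/-- `a` and `b` lie in the same weakly connected component of `G_{Q,I}`. -/
def SameComp (s t : A → V) (Zi : List A → Prop) (ω : A → List A) (a b : A) : Prop :=
  Relation.ReflTransGen (RAdj s t Zi ω) a b

/-- `N` (a set of arrows) is (the arrow set `(Q_N)₁` of) a weakly connected
component of the ramifications graph `G_{Q,I}`. -/
def IsComp (s t : A → V) (Zi : List A → Prop) (ω : A → List A) (N : Set A) : Prop :=
  ∃ a : A, N = {b | SameComp s t Zi ω a b}

/-- A path of the subquiver `Q_N`. -/
def PathIn (s t : A → V) (N : Set A) (p : List A) : Prop :=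
  IsPath s t p ∧ ∀ x ∈ p, x ∈ N

/-- `m` is (a representative of) a maximal path of `A_N = kQ_N/I_N`
(for `N = Set.univ` this is a maximal path of `A = kQ/I`). -/
def MaxPathIn (s t : A → V) (Zi : List A → Prop) (N : Set A) (m : List A) : Prop :=
  PathIn s t N m ∧ ¬ Zi m ∧
  (∀ α ∈ N, (∃ x ∈ m.getLast?, t x = s α) → Zi (m ++ [α])) ∧
  (∀ α ∈ N, (∃ x ∈ m.head?, t α = s x) → Zi (α :: m))

/-- `A_N` is a UMP algebra: any two non-disjoint maximal paths coincide. -/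
def UMPin (s t : A → V) (Zi : List A → Prop) (N : Set A) : Prop :=
  ∀ m m' : List A, MaxPathIn s t Zi N m → MaxPathIn s t Zi N m' →
    (∃ a, a ∈ m ∧ a ∈ m') → m = m'

/-- `A = kQ/I` is special multiserial: every arrow has at most one right and at
most one left arrow-extension outside `I`. -/
def SpecialMultiserial (s t : A → V) (Zi : List A → Prop) : Prop :=
  ∀ α β γ : A,
    ((t α = s β ∧ ¬ Zi [α, β]) → (t α = s γ ∧ ¬ Zi [α, γ]) → β = γ) ∧
    ((t β = s α ∧ ¬ Zi [β, α]) → (t γ = s α ∧ ¬ Zi [γ, α]) → β = γ)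

/-- `ws = [ω_0, …, ω_n]` is the enumeration of the vertices of the component `N`
in edge order; `ω(N) = ws.flatten`. -/
def CompEnum (s t : A → V) (Zi : List A → Prop) (ω : A → List A)
    (N : Set A) (ws : List (List A)) : Prop :=
  ws ≠ [] ∧ ws.Nodup ∧ (∀ p, p ∈ ws ↔ ∃ a ∈ N, ω a = p) ∧
  ws.Chain' (fun p q => JunctionOK s t Zi p q) ∧ IsPath s t ws.flatten

/-- `W^{(l)}`, the `l`-fold concatenation of `W`. -/
def cyclePow (W : List A) (l : ℕ) : List A := (List.replicate l W).flatten

/-- `R` is a minimal set of zero relations generating `I_N` (so `A_N` is monomial). -/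
def MinGen (s t : A → V) (Zi : List A → Prop) (N : Set A) (R : Set (List A)) : Prop :=
  (∀ r ∈ R, PathIn s t N r ∧ Zi r) ∧
  (∀ p, PathIn s t N p → (Zi p ↔ ∃ r ∈ R, r <:+: p)) ∧
  (∀ r ∈ R, ∀ r' ∈ R, r <:+: r' → r = r')

/-- `r` is a quadratic junction relation `ω_a^{l_a} ω_b^0` with `a, b ∈ (Q_N)₁`. -/
def IsJuncRel (ω : A → List A) (N : Set A) (r : List A) : Prop :=
  ∃ a ∈ N, ∃ b ∈ N, ∃ x ∈ (ω a).getLast?, ∃ y ∈ (ω b).head?, r = [x, y]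

/-- `S_N = R_N \ Ω_N`. -/
def SRel (ω : A → List A) (N : Set A) (R : Set (List A)) : Set (List A) :=
  {r ∈ R | ¬ IsJuncRel ω N r}

/-- The order `≤_f` on arrows given by position along `W = ω(N)`. -/
def leF (W : List A) (α β : A) : Prop :=
  ∃ u u' : List A, W = u ++ α :: u' ∧ β ∈ α :: u'

/-- The order `≤_s` on relations: comparison of first arrows. -/
def leS (W : List A) (u v : List A) : Prop :=
  ∃ x ∈ u.head?, ∃ y ∈ v.head?, leF W x y

/-- `ss = [s_1, …, s_k]` enumerates `S` in strictly increasing `≤_s` order. -/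
def SEnum (W : List A) (S : Set (List A)) (ss : List (List A)) : Prop :=
  ss.Nodup ∧ (∀ r, r ∈ ss ↔ r ∈ S) ∧ ss.Chain' (fun u v => leS W u v ∧ u ≠ v)

/-- `m` is one of the paths `m_i`, `0 ≤ i ≤ k`, of the definition of `S_N^*`.
Note that `ω_n^{l_n} ω_0^0 ∈ I_N` is expressed by `¬ JunctionOK s t Zi W W`. -/
def IsMi (s t : A → V) (Zi : List A → Prop) (W : List A)
    (ss : List (List A)) (m : List A) : Prop :=
  -- case `0 < i < k`
  (∃ p ∈ ss.zip ss.tail, ∃ u v v' : List A, ∃ x ∈ p.1.head?, ∃ y ∈ p.2.head?,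
      W = u ++ [x] ++ v ++ [y] ++ v' ∧ m = v ++ p.2.dropLast) ∨
  -- case `i = 0`, `ω_n^{l_n} ω_0^0 ∈ I_N`
  (¬ JunctionOK s t Zi W W ∧
    ∃ s1 ∈ ss.head?, ∃ u z : List A, W = u ++ s1 ++ z ∧ m = u ++ s1.dropLast) ∨
  -- case `i = k`, `ω_n^{l_n} ω_0^0 ∈ I_N`
  (¬ JunctionOK s t Zi W W ∧
    ∃ sk ∈ ss.getLast?, ∃ v z : List A, W = z ++ sk ++ v ∧ m = sk.tail ++ v) ∨
  -- case `i ∈ {0, k}`, `ω_n^{l_n} ω_0^0 ∉ I_N`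
  (JunctionOK s t Zi W W ∧
    ∃ s1 ∈ ss.head?, ∃ sk ∈ ss.getLast?, ∃ u v z z' : List A,
      ∃ x ∈ s1.head?, ∃ y ∈ sk.head?,
      W = u ++ [x] ++ z ∧ W = z' ++ [y] ++ v ∧ m = v ++ u ++ s1.dropLast)

/-- `r` is an `ω`-relation: a zero relation of length greater than two which is the
unique element of `I` dividing it. -/
def IsOmegaRel (s t : A → V) (Zi : List A → Prop) (r : List A) : Prop :=
  IsPath s t r ∧ Zi r ∧ 3 ≤ r.length ∧ ∀ r' : List A, Zi r' → r' <:+: r → r' = r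

/-! ### Auxiliary lemmas -/

lemma mem_of_getLast' {x : A} {l : List A} (hx : x ∈ l.getLast?) : x ∈ l := by
  obtain ⟨h, rfl⟩ := List.mem_getLast?_eq_getLast hx
  exact List.getLast_mem h

lemma mem_of_head' {x : A} {l : List A} (hx : x ∈ l.head?) : x ∈ l := by
  rw [List.eq_cons_of_mem_head? hx]; exact List.mem_cons_self

lemma head?_append_ne_nil {u v : List A} (hu : u ≠ []) : (u ++ v).head? = u.head? := by
  cases u with
  | nil => exact absurd rfl hu
  | cons a u' => simp

lemma getLast?_append_ne_nil {u v : List A} (hv : v ≠ []) : (u ++ v).getLast? = v.getLast? :=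
  List.getLast?_append_of_ne_nil u hv

lemma singleton_infix {x : A} {l : List A} (h : x ∈ l) : [x] <:+: l := by
  obtain ⟨s, t, rfl⟩ := List.append_of_mem h
  exact ⟨s, t, by simp⟩

lemma pair_infix_append {x y : A} : ∀ {u : List A} (v : List A), u ≠ [] → v ≠ [] →
    [x, y] <:+: u ++ v →
    [x, y] <:+: u ∨ [x, y] <:+: v ∨ (x ∈ u.getLast? ∧ y ∈ v.head?)
  | [], _, hu, _, _ => absurd rfl hu
  | [c], v, _, hv, h => by
    rw [List.singleton_append, List.infix_cons_iff] at h
    rcases h with h | h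
    · obtain ⟨t, ht⟩ := h
      simp only [List.cons_append, List.nil_append, List.cons.injEq] at ht
      right; right
      refine ⟨by simp [ht.1], ?_⟩
      cases v with
      | nil => exact absurd rfl hv
      | cons d v' =>
        simp only [List.cons.injEq] at ht
        simp [← ht.2.1]
    · exact Or.inr (Or.inl h)
  | c :: d :: u', v, _, hv, h => by
    rw [List.cons_append, List.infix_cons_iff] at h
    rcases h with h | h
    · obtain ⟨t, ht⟩ := h
      simp only [List.cons_append, List.nil_append, List.cons.injEq] at ht
      exact Or.inl ⟨[], u', by simp [ht.1, ht.2.1]⟩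
    · rcases pair_infix_append v (by simp) hv h with h' | h' | h'
      · exact Or.inl (h'.trans (List.infix_cons (List.infix_refl _)))
      · exact Or.inr (Or.inl h')
      · exact Or.inr (Or.inr ⟨List.mem_getLast?_cons h'.1, h'.2⟩)

lemma pair_infix_flatten {x y : A} : ∀ {L : List (List A)}, (∀ p ∈ L, p ≠ []) →
    [x, y] <:+: L.flatten →
    (∃ p ∈ L, [x, y] <:+: p) ∨
    ∃ U p q W, L = U ++ p :: q :: W ∧ x ∈ p.getLast? ∧ y ∈ q.head?
  | [], _, h => by
    rw [List.flatten_nil] at h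
    have := List.eq_nil_of_infix_nil h
    simp at this
  | [p], _, h => by
    rw [List.flatten_cons, List.flatten_nil, List.append_nil] at h
    exact Or.inl ⟨p, by simp, h⟩
  | p :: q :: L, hne, h => by
    have hqne : q ≠ [] := hne q (by simp)
    have hq : (q :: L).flatten ≠ [] := by
      rw [List.flatten_cons]
      cases q with
      | nil => exact absurd rfl hqne
      | cons _ _ => simp
    rw [List.flatten_cons] at h
    rcases pair_infix_append _ (hne p (by simp)) hq h with h' | h' | h'
    · exact Or.inl ⟨p, by simp, h'⟩
    · rcases pair_infix_flatten (fun r hr => hne r (List.mem_cons_of_mem _ hr)) h' with h'' | h''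
      · obtain ⟨r, hr, hr'⟩ := h''
        exact Or.inl ⟨r, List.mem_cons_of_mem _ hr, hr'⟩
      · obtain ⟨U, r, r', W, hdec, hx, hy⟩ := h''
        exact Or.inr ⟨p :: U, r, r', W, by rw [hdec]; rfl, hx, hy⟩
    · refine Or.inr ⟨[], p, q, L, rfl, h'.1, ?_⟩
      have := h'.2
      rwa [List.flatten_cons, head?_append_ne_nil hqne] at this

lemma nodup_pair_last {x y : A} {W : List A} (hn : W.Nodup) (h : [x, y] <:+: W)
    (hx : x ∈ W.getLast?) : False := by
  obtain ⟨u, v, rfl⟩ := h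
  have hsuf : x :: y :: v <:+ u ++ [x, y] ++ v := ⟨u, by simp⟩
  have hnd : (x :: y :: v).Nodup := hn.sublist hsuf.sublist
  have heq : u ++ [x, y] ++ v = (u ++ [x]) ++ (y :: v) := by simp
  rw [heq, List.getLast?_append_cons] at hx
  exact (List.nodup_cons.mp hnd).1 (mem_of_getLast' hx)

lemma nodup_pair_head {x y : A} {W : List A} (hn : W.Nodup) (h : [x, y] <:+: W)
    (hy : y ∈ W.head?) : False := by
  obtain ⟨u, v, rfl⟩ := h
  cases u with
  | nil =>
    simp only [List.nil_append, List.cons_append, List.head?_cons, Option.mem_def,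
      Option.some.injEq] at hy
    subst hy
    simp at hn
  | cons c u' =>
    simp only [List.cons_append, List.head?_cons, Option.mem_def, Option.some.injEq] at hy
    have hd := List.disjoint_of_nodup_append
      (by simpa using hn : ((c :: u') ++ ([x, y] ++ v)).Nodup)
    exact hd (by rw [hy]; exact List.mem_cons_self) (by simp)

lemma nodup_append_eq {y : A} : ∀ {u : List A} (u' : List A) {v v' : List A},
    u ++ y :: v = u' ++ y :: v' → y ∉ u → y ∉ u' → u = u' ∧ v = v'
  | [], [], _, _, h, _, _ => ⟨rfl, by simpa using h⟩
  | [], c :: u', _, _, h, _, hu' => by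
    simp only [List.nil_append, List.cons_append, List.cons.injEq] at h
    exact absurd (h.1 ▸ List.mem_cons_self) hu'
  | c :: u, [], _, _, h, hu, _ => by
    simp only [List.nil_append, List.cons_append, List.cons.injEq] at h
    exact absurd (h.1 ▸ List.mem_cons_self) (h.1 ▸ hu)
  | c :: u, c' :: u', v, v', h, hu, hu' => by
    simp only [List.cons_append, List.cons.injEq] at h
    obtain ⟨rfl, h⟩ := h
    have := nodup_append_eq u' h (fun hm => hu (List.mem_cons_of_mem _ hm))
      (fun hm => hu' (List.mem_cons_of_mem _ hm))
    exact ⟨by rw [this.1], this.2⟩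

lemma chain_pairs_infix {W : List A} (hn : W.Nodup) :
    ∀ {m : List A}, m ≠ [] → (∀ x ∈ m, x ∈ W) →
    (∀ x y : A, [x, y] <:+: m → [x, y] <:+: W) → m <:+: W
  | [], hm, _, _ => absurd rfl hm
  | [x], _, hmem, _ => singleton_infix (hmem x (by simp))
  | x :: y :: m', _, hmem, hpairs => by
    obtain ⟨u, v, huv⟩ := chain_pairs_infix hn (m := y :: m') (by simp)
      (fun z hz => hmem z (List.mem_cons_of_mem _ hz))
      (fun a b hab => hpairs a b (hab.trans (List.infix_cons (List.infix_refl _))))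
    obtain ⟨u', v', huv'⟩ := hpairs x y ⟨[], m', by simp⟩
    have e1 : u ++ y :: (m' ++ v) = W := by rw [← huv]; simp
    have e2 : (u' ++ [x]) ++ y :: v' = W := by rw [← huv']; simp
    have hyu : y ∉ u := by
      have hn' : (u ++ y :: (m' ++ v)).Nodup := e1 ▸ hn
      exact fun hm => List.disjoint_of_nodup_append hn' hm (List.mem_cons_self)
    have hyu' : y ∉ u' ++ [x] := by
      have hn' : ((u' ++ [x]) ++ y :: v').Nodup := e2 ▸ hn
      exact fun hm => List.disjoint_of_nodup_append hn' hm (List.mem_cons_self)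
    obtain ⟨h1, h2⟩ := nodup_append_eq (u' ++ [x]) (e1.trans e2.symm) hyu hyu'
    exact ⟨u', v, by rw [← huv, h1]; simp⟩


lemma chain_of_pair {s t : A → V} {W : List A} (h : W.Chain' (fun a b => t a = s b))
    {x y : A} (hxy : [x, y] <:+: W) : t x = s y :=
  (List.isChain_cons_cons.mp (h.infix hxy)).1

lemma forward_det (s t : A → V) :
    ∀ (v : List A) (x : A) (v' : List A),
      (x :: v).Chain' (fun a b => t a = s b) → (x :: v').Chain' (fun a b => t a = s b) →
      (∀ z ∈ (x :: v).dropLast, ∃! b : A, s b = t z) →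
      (∀ z ∈ (x :: v').dropLast, ∃! b : A, s b = t z) →
      v <+: v' ∨ v' <+: v
  | [], _, _, _, _, _, _ => Or.inl List.nil_prefix
  | _ :: _, _, [], _, _, _, _ => Or.inr List.nil_prefix
  | b :: v2, x, b' :: v2', hc, hc', hd, hd' => by
    have hx : x ∈ (x :: b :: v2).dropLast := by
      rw [List.dropLast_cons₂]; exact List.mem_cons_self
    have hb : s b = t x := ((List.isChain_cons_cons.mp hc).1).symm
    have hb' : s b' = t x := ((List.isChain_cons_cons.mp hc').1).symm
    obtain ⟨c, hc1, hu⟩ := hd x hx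
    obtain rfl : b = b' := (hu b hb).trans (hu b' hb').symm
    have hsub : ∀ z ∈ (b :: v2).dropLast, z ∈ (x :: b :: v2).dropLast := by
      intro z hz; rw [List.dropLast_cons₂]; exact List.mem_cons_of_mem _ hz
    have hsub' : ∀ z ∈ (b :: v2').dropLast, z ∈ (x :: b :: v2').dropLast := by
      intro z hz; rw [List.dropLast_cons₂]; exact List.mem_cons_of_mem _ hz
    rcases forward_det s t v2 b v2' (List.isChain_cons_cons.mp hc).2 (List.isChain_cons_cons.mp hc').2
      (fun z hz => hd z (hsub z hz)) (fun z hz => hd' z (hsub' z hz)) with h | h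
    · exact Or.inl (List.cons_prefix_cons.mpr ⟨rfl, h⟩)
    · exact Or.inr (List.cons_prefix_cons.mpr ⟨rfl, h⟩)

lemma backward_det (s t : A → V) (u : List A) :
    ∀ (x : A) (u' : List A),
      (u ++ [x]).Chain' (fun a b => t a = s b) → (u' ++ [x]).Chain' (fun a b => t a = s b) →
      (∀ z ∈ u, ∃! b : A, t b = t z) → (∀ z ∈ u', ∃! b : A, t b = t z) →
      u <:+ u' ∨ u' <:+ u := by
  induction u using List.reverseRecOn with
  | nil => intro x u' _ _ _ _; exact Or.inl List.nil_suffix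
  | append_singleton u0 y ih =>
    intro x u' hc hc' hd hd'
    rcases List.eq_nil_or_concat u' with rfl | ⟨u0', y', rfl⟩
    · exact Or.inr List.nil_suffix
    · rw [List.concat_eq_append]
      have hyx : t y = s x := by
        have := (List.isChain_append.mp (by simpa using hc : ((u0 ++ [y]) ++ [x]).Chain' _)).2.2
        exact this y (by simp [List.getLast?_concat]) x rfl
      have hyx' : t y' = s x := by
        have := (List.isChain_append.mp
          (by simpa using hc' : ((u0' ++ [y']) ++ [x]).Chain' _)).2.2
        exact this y' (by simp [List.getLast?_concat]) x rfl
      obtain ⟨c, hc1, hu⟩ := hd y (by simp)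
      have hyy : y' = y := by
        have h1 := hu y rfl
        have h2 := hu y' (hyx'.trans hyx.symm)
        exact h2.trans h1.symm
      subst hyy
      have hcc : (u0 ++ [y']).Chain' (fun a b => t a = s b) :=
        hc.prefix (by simpa using (List.prefix_append (u0 ++ [y']) [x]))
      have hcc' : (u0' ++ [y']).Chain' (fun a b => t a = s b) :=
        hc'.prefix (by simpa using (List.prefix_append (u0' ++ [y']) [x]))
      rcases ih y' u0' hcc hcc' (fun z hz => hd z (by simp [hz]))
        (fun z hz => hd' z (by simp [hz])) with h | h
      · obtain ⟨w, rfl⟩ := h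
        exact Or.inl ⟨w, by simp⟩
      · obtain ⟨w, rfl⟩ := h
        exact Or.inr ⟨w, by simp⟩

lemma phi_max_infix {s t : A → V} {x : A} {p q : List A}
    (hp : p ∈ Phi s t x) (hq : q ∈ Phi s t x)
    (hqmax : ∀ r ∈ Phi s t x, r.length ≤ q.length) : p <:+: q := by
  obtain ⟨hppath, ⟨u, v, hpuv⟩, hpdeg⟩ := hp
  obtain ⟨hqpath, ⟨u', v', hquv⟩, hqdeg⟩ := hq
  have hpc : p.Chain' (fun a b => t a = s b) := hppath.2
  have hqc : q.Chain' (fun a b => t a = s b) := hqpath.2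
  have hpd : p.dropLast = u ++ ([x] ++ v).dropLast := by
    rw [← hpuv, List.append_assoc, List.dropLast_append_of_ne_nil (by simp)]
  have hqd : q.dropLast = u' ++ ([x] ++ v').dropLast := by
    rw [← hquv, List.append_assoc, List.dropLast_append_of_ne_nil (by simp)]
  have hcv : (x :: v).Chain' (fun a b => t a = s b) :=
    hpc.suffix ⟨u, by rw [← hpuv]; simp⟩
  have hcv' : (x :: v').Chain' (fun a b => t a = s b) :=
    hqc.suffix ⟨u', by rw [← hquv]; simp⟩
  have hdv : ∀ z ∈ (x :: v).dropLast, ∃! b : A, s b = t z := by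
    intro z hz
    exact (hpdeg z (by rw [hpd]; exact List.mem_append_right _ hz)).1
  have hdv' : ∀ z ∈ (x :: v').dropLast, ∃! b : A, s b = t z := by
    intro z hz
    exact (hqdeg z (by rw [hqd]; exact List.mem_append_right _ hz)).1
  have hf := forward_det s t v x v' hcv hcv' hdv hdv'
  have hcu : (u ++ [x]).Chain' (fun a b => t a = s b) :=
    hpc.prefix ⟨v, by rw [← hpuv]⟩
  have hcu' : (u' ++ [x]).Chain' (fun a b => t a = s b) :=
    hqc.prefix ⟨v', by rw [← hquv]⟩
  have hmemu : ∀ z ∈ u, z ∈ p.dropLast := by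
    intro z hz; rw [hpd]; exact List.mem_append_left _ hz
  have hmemu' : ∀ z ∈ u', z ∈ q.dropLast := by
    intro z hz; rw [hqd]; exact List.mem_append_left _ hz
  have hb := backward_det s t u x u' hcu hcu'
    (fun z hz => (hpdeg z (hmemu z hz)).2) (fun z hz => (hqdeg z (hmemu' z hz)).2)
  have hbu : u <:+ u' := by
    rcases hb with h | h
    · exact h
    · obtain ⟨w, rfl⟩ := h
      cases w with
      | nil => simp
      | cons c w' =>
        exfalso
        set q2 := (c :: w') ++ q with hq2
        have hpc2 : ((c :: w') ++ (u' ++ [x] ++ v)).Chain' (fun a b => t a = s b) := by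
          rw [show (c :: w') ++ (u' ++ [x] ++ v) = c :: w' ++ u' ++ [x] ++ v by simp, hpuv]
          exact hpc
        have hjp := (List.isChain_append.mp hpc2).2.2
        have hchq2 : q2.Chain' (fun a b => t a = s b) := by
          rw [hq2]
          apply List.isChain_append.mpr
          refine ⟨hpc.prefix ⟨u' ++ [x] ++ v, by rw [← hpuv]; simp⟩, hqc, ?_⟩
          intro z1 hz1 z2 hz2
          apply hjp z1 hz1 z2
          rw [← hquv, head?_append_ne_nil (u := u' ++ [x]) (by simp)] at hz2
          rwa [head?_append_ne_nil (u := u' ++ [x]) (by simp)]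
        have hq2phi : q2 ∈ Phi s t x := by
          refine ⟨⟨by simp [hq2], hchq2⟩, ⟨(c :: w') ++ u', v', by rw [hq2, ← hquv]; simp⟩, ?_⟩
          intro z hz
          rw [hq2, List.dropLast_append_of_ne_nil hqpath.1] at hz
          rcases List.mem_append.mp hz with hz | hz
          · refine hpdeg z ?_
            rw [hpd]
            exact List.mem_append_left _ (List.mem_append_left _ hz)
          · exact hqdeg z hz
        have := hqmax q2 hq2phi
        rw [hq2] at this
        simp at this
  have hfv : v <+: v' := by
    rcases hf with h | h
    · exact h
    · obtain ⟨w, rfl⟩ := h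
      cases w with
      | nil => simp
      | cons c w' =>
        exfalso
        set q3 := q ++ (c :: w') with hq3
        have hpc3 : ((u ++ [x] ++ v') ++ (c :: w')).Chain' (fun a b => t a = s b) := by
          rw [show (u ++ [x] ++ v') ++ (c :: w') = u ++ [x] ++ (v' ++ c :: w') by simp, hpuv]
          exact hpc
        have hjp := (List.isChain_append.mp hpc3).2.2
        have e1 : q.getLast? = ([x] ++ v').getLast? := by
          rw [← hquv, List.append_assoc]; exact getLast?_append_ne_nil (by simp)
        have e2 : (u ++ [x] ++ v').getLast? = ([x] ++ v').getLast? := by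
          rw [List.append_assoc]; exact getLast?_append_ne_nil (by simp)
        have hchq3 : q3.Chain' (fun a b => t a = s b) := by
          rw [hq3]
          apply List.isChain_append.mpr
          refine ⟨hqc, hpc.suffix ⟨u ++ [x] ++ v', by rw [← hpuv]; simp⟩, ?_⟩
          intro z1 hz1 z2 hz2
          rw [e1] at hz1
          exact hjp z1 (by rw [e2]; exact hz1) z2 hz2
        have hmemxv : ∀ z, z ∈ [x] ++ v' → z ∈ p.dropLast := by
          intro z hz
          rw [hpd]
          apply List.mem_append_right
          rw [show [x] ++ (v' ++ c :: w') = ([x] ++ v') ++ (c :: w') by simp,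
            List.dropLast_append_of_ne_nil (by simp)]
          exact List.mem_append_left _ hz
        have hq3phi : q3 ∈ Phi s t x := by
          refine ⟨⟨by simp [hq3, hqpath.1], hchq3⟩,
            ⟨u', v' ++ (c :: w'), by rw [hq3, ← hquv]; simp⟩, ?_⟩
          intro z hz
          rw [hq3, List.dropLast_append_of_ne_nil (by simp)] at hz
          rcases List.mem_append.mp hz with hz | hz
          · rw [← hquv, List.append_assoc] at hz
            rcases List.mem_append.mp hz with hz | hz
            · exact hqdeg z (by rw [hqd]; exact List.mem_append_left _ hz)
            · exact hpdeg z (hmemxv z hz)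
          · refine hpdeg z ?_
            rw [hpd]
            apply List.mem_append_right
            rw [show [x] ++ (v' ++ c :: w') = ([x] ++ v') ++ (c :: w') by simp,
              List.dropLast_append_of_ne_nil (by simp)]
            exact List.mem_append_right _ hz
        have := hqmax q3 hq3phi
        rw [hq3] at this
        simp at this
  obtain ⟨w, rfl⟩ := hbu
  obtain ⟨w2, rfl⟩ := hfv
  exact ⟨w, w2, by rw [← hquv, ← hpuv]; simp⟩


lemma cyclePow_succ (W : List A) (l : ℕ) : cyclePow W (l + 1) = W ++ cyclePow W l := by
  simp [cyclePow, List.replicate_succ]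

lemma mem_cyclePow {x : A} {W : List A} {l : ℕ} (h : x ∈ cyclePow W l) : x ∈ W := by
  simp only [cyclePow, List.mem_flatten] at h
  obtain ⟨p, hp, hx⟩ := h
  rwa [List.eq_of_mem_replicate hp] at hx

lemma head?_cyclePow {W : List A} (hW : W ≠ []) {l : ℕ} {y : A}
    (h : y ∈ (cyclePow W l).head?) : y ∈ W.head? := by
  cases l with
  | zero => simp [cyclePow] at h
  | succ l => rwa [cyclePow_succ, head?_append_ne_nil hW] at h

lemma cyclePow_ne_nil {W : List A} (hW : W ≠ []) {l : ℕ} (hl : l ≠ 0) :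
    cyclePow W l ≠ [] := by
  cases l with
  | zero => exact absurd rfl hl
  | succ l => rw [cyclePow_succ]; simp [hW]

lemma length_cyclePow (W : List A) (l : ℕ) : (cyclePow W l).length = l * W.length := by
  simp [cyclePow, List.length_flatten, List.map_replicate, List.sum_replicate, smul_eq_mul]

lemma chain'_cyclePow {R : A → A → Prop} {W : List A} (hW : W ≠ []) (hc : W.Chain' R)
    (hj : ∀ x ∈ W.getLast?, ∀ y ∈ W.head?, R x y) : ∀ l : ℕ, (cyclePow W l).Chain' R
  | 0 => by simp [cyclePow]; exact List.isChain_nil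
  | l + 1 => by
    rw [cyclePow_succ]
    exact List.isChain_append.mpr ⟨hc, chain'_cyclePow hW hc hj l,
      fun x hx y hy => hj x hx y (head?_cyclePow hW hy)⟩

lemma pair_infix_cyclePow {x y : A} {W : List A} (hW : W ≠ []) :
    ∀ {l : ℕ}, [x, y] <:+: cyclePow W l → [x, y] <:+: W ∨ (x ∈ W.getLast? ∧ y ∈ W.head?)
  | 0, h => by
    rw [show cyclePow W 0 = [] from rfl] at h
    exact absurd (List.eq_nil_of_infix_nil h) (by simp)
  | l + 1, h => by
    rw [cyclePow_succ] at h
    by_cases h0 : cyclePow W l = []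
    · rw [h0, List.append_nil] at h; exact Or.inl h
    · rcases pair_infix_append _ hW h0 h with h' | h' | h'
      · exact Or.inl h'
      · exact pair_infix_cyclePow hW h'
      · exact Or.inr ⟨h'.1, head?_cyclePow hW h'.2⟩

lemma omega_path {s t : A → V} {ω : A → List A} (hω : OmegaSpec s t ω) (a : A) :
    IsPath s t (ω a) := by
  by_cases hc : IsCyclicQuiver s t
  · obtain ⟨p, hp, -, -, -, hall⟩ := hω.1 hc
    rw [hall a]; exact hp
  · exact ((hω.2 hc a).1).1

lemma omega_self_mem {s t : A → V} {ω : A → List A} (hω : OmegaSpec s t ω) (a : A) :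
    a ∈ ω a := by
  by_cases hc : IsCyclicQuiver s t
  · obtain ⟨p, -, -, hmem, -, hall⟩ := hω.1 hc
    rw [hall a]; exact hmem a
  · exact (((hω.2 hc a).1).2.1).sublist.subset (by simp)

lemma omega_mem {s t : A → V} {ω : A → List A} (hω : OmegaSpec s t ω) {a x : A}
    (hx : x ∈ ω a) : ω x = ω a := by
  by_cases hc : IsCyclicQuiver s t
  · obtain ⟨p, -, -, -, -, hall⟩ := hω.1 hc
    rw [hall a, hall x]
  · have h2 := hω.2 hc
    have hpx : ω a ∈ Phi s t x := ⟨(h2 a).1.1, singleton_infix hx, (h2 a).1.2.2⟩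
    have hinf : ω a <:+: ω x := phi_max_infix hpx (h2 x).1 (h2 x).2
    have haq : ω x ∈ Phi s t a := ⟨(h2 x).1.1, ((h2 a).1.2.1).trans hinf, (h2 x).1.2.2⟩
    exact (hinf.sublist.eq_of_length
      (le_antisymm hinf.length_le ((h2 a).2 _ haq))).symm

lemma dup_decomp {x : A} : ∀ {l : List A}, List.Sublist [x, x] l →
    ∃ u v w, l = u ++ (x :: v) ++ (x :: w)
  | [], h => by simp at h
  | c :: l', h => by
    cases h with
    | cons _ h' =>
      obtain ⟨u, v, w, hd⟩ := dup_decomp h'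
      exact ⟨c :: u, v, w, by rw [hd]; simp⟩
    | cons_cons _ h' =>
      obtain ⟨v, w, hd⟩ := List.append_of_mem (List.singleton_sublist.mp h')
      exact ⟨[], v, w, by rw [hd]; simp⟩

lemma omega_nodup {s t : A → V} {ω : A → List A} (hω : OmegaSpec s t ω) (a : A) :
    (ω a).Nodup := by
  by_cases hc : IsCyclicQuiver s t
  · obtain ⟨p, -, hnd, -, -, hall⟩ := hω.1 hc
    rw [hall a]; exact hnd
  · by_contra hnd
    obtain ⟨x, hdup⟩ := List.exists_duplicate_iff_not_nodup.mpr hnd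
    obtain ⟨u, v, w, hdec⟩ := dup_decomp (List.duplicate_iff_sublist.mp hdup)
    have h2 := hω.2 hc
    have hphi := (h2 a).1
    have hpc' : ((u ++ x :: v) ++ (x :: w)).Chain' (fun a b => t a = s b) := by
      rw [show (u ++ x :: v) ++ (x :: w) = u ++ (x :: v) ++ (x :: w) from by simp, ← hdec]
      exact hphi.1.2
    obtain ⟨c1, c2, j⟩ := List.isChain_append.mp hpc'
    have j' : ∀ z1 ∈ (x :: v).getLast?, (fun a b => t a = s b) z1 x := by
      intro z1 hz1
      exact j z1 (by rwa [getLast?_append_ne_nil (by simp : x :: v ≠ [])]) x rfl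
    set P := (u ++ x :: v) ++ ((x :: v) ++ (x :: w)) with hP
    have hchP : P.Chain' (fun a b => t a = s b) := by
      rw [hP]
      refine List.isChain_append.mpr ⟨c1, List.isChain_append.mpr
        ⟨c1.suffix ⟨u, rfl⟩, c2, fun z1 hz1 z2 hz2 => ?_⟩, fun z1 hz1 z2 hz2 => ?_⟩
      · obtain rfl : x = z2 := by simpa using hz2
        exact j' z1 hz1
      · obtain rfl : x = z2 := by
          rw [head?_append_ne_nil (by simp : x :: v ≠ [])] at hz2
          simpa using hz2
        exact j z1 hz1 _ rfl
    have hdL : (ω a).dropLast = (u ++ x :: v) ++ (x :: w).dropLast := by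
      rw [hdec, show u ++ (x :: v) ++ (x :: w) = (u ++ x :: v) ++ (x :: w) from by simp,
        List.dropLast_append_of_ne_nil (by simp)]
    have hPd : P.dropLast = (u ++ x :: v) ++ ((x :: v) ++ (x :: w).dropLast) := by
      rw [hP, List.dropLast_append_of_ne_nil (by simp),
        List.dropLast_append_of_ne_nil (by simp)]
    have hPphi : P ∈ Phi s t a := by
      refine ⟨⟨by simp [hP], hchP⟩, singleton_infix ?_, ?_⟩
      · have ha := omega_self_mem hω a
        rw [hdec] at ha
        rw [hP]
        rcases List.mem_append.mp ha with ha | ha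
        · rcases List.mem_append.mp ha with ha | ha
          · exact List.mem_append_left _ (List.mem_append_left _ ha)
          · exact List.mem_append_left _ (List.mem_append_right _ ha)
        · exact List.mem_append_right _ (List.mem_append_right _ ha)
      · intro z hz
        rw [hPd] at hz
        refine hphi.2.2 z ?_
        rw [hdL]
        rcases List.mem_append.mp hz with hz | hz
        · exact List.mem_append_left _ hz
        · rcases List.mem_append.mp hz with hz | hz
          · exact List.mem_append_left _ (List.mem_append_right _ hz)
          · exact List.mem_append_right _ hz
    have hlen := (h2 a).2 P hPphi
    rw [hP, hdec] at hlen
    simp at hlen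
    omega

/-- if `S_N = ∅`, then the set of maximal paths of `A_N` is exactly
`{ω(N) + I_N}`; in particular `A_N` is a UMP algebra. -/
theorem stmt_10 [Fintype V] [Fintype A] (s t : A → V) (Zi : List A → Prop)
    (ω : A → List A) (hω : OmegaSpec s t ω)
    (hZ : ZeroClosed Zi) (hadm : Admissible s t Zi)
    (hsm : SpecialMultiserial s t Zi)
    (N : Set A) (hN : IsComp s t Zi ω N)
    (ws : List (List A)) (hws : CompEnum s t Zi ω N ws)
    (R : Set (List A)) (hR : MinGen s t Zi N R)
    (hS : SRel ω N R = ∅) :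
    (∀ m : List A, MaxPathIn s t Zi N m ↔ m = ws.flatten) ∧ UMPin s t Zi N := by
  classical
  obtain ⟨hwsne, hwsnd, hwsmem, hchain, hWpath⟩ := hws
  set W := ws.flatten with hW
  have homega_ws : ∀ p ∈ ws, ∃ a ∈ N, ω a = p := fun p hp => (hwsmem p).mp hp
  have hpne : ∀ p ∈ ws, p ≠ [] := by
    intro p hp
    obtain ⟨a, -, rfl⟩ := homega_ws p hp
    exact (omega_path hω a).1
  have hWne : W ≠ [] := hWpath.1
  obtain ⟨a₀, hNa₀⟩ := hN
  have hmem_ws_N : ∀ p ∈ ws, ∀ x ∈ p, ω x = p ∧ x ∈ N := by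
    intro p hp x hx
    obtain ⟨a, haN, rfl⟩ := homega_ws p hp
    refine ⟨omega_mem hω hx, ?_⟩
    have hsc : SameComp s t Zi ω a₀ a := by rw [hNa₀] at haN; exact haN
    rw [hNa₀]
    exact hsc.tail (Or.inl (omega_mem hω hx).symm)
  have hWN : ∀ x ∈ W, x ∈ N := by
    intro x hx
    obtain ⟨p, hp, hxp⟩ := List.mem_flatten.mp hx
    exact (hmem_ws_N p hp x hxp).2
  have hwsnodups : ∀ p ∈ ws, p.Nodup := by
    intro p hp; obtain ⟨a, -, rfl⟩ := homega_ws p hp; exact omega_nodup hω a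
  have hWnd : W.Nodup := by
    rw [hW, List.nodup_flatten]
    refine ⟨hwsnodups, List.Pairwise.imp_of_mem ?_ hwsnd⟩
    intro p q hp hq hne x hxp hxq
    exact hne (((hmem_ws_N p hp x hxp).1.symm).trans (hmem_ws_N q hq x hxq).1)
  have hmemN_W : ∀ x ∈ N, x ∈ W := by
    intro x hx
    exact List.mem_flatten.mpr ⟨ω x, (hwsmem (ω x)).mpr ⟨x, hx, rfl⟩, omega_self_mem hω x⟩
  have hjunc : ∀ (U : List (List A)) (p q : List A) (Vl : List (List A)),
      ws = U ++ p :: q :: Vl → JunctionOK s t Zi p q := by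
    intro U p q Vl hdec
    have h2 : [p, q].Chain' (fun p q => JunctionOK s t Zi p q) :=
      hchain.infix ⟨U, Vl, by rw [hdec]; simp⟩
    exact (List.isChain_cons_cons.mp h2).1
  have hRpair : ∀ r ∈ R, ∃ x' y', r = [x', y'] ∧
      x' ∈ (ω x').getLast? ∧ y' ∈ (ω y').head? := by
    intro r hr
    have hIJR : IsJuncRel ω N r := by
      by_contra hnj
      exact Set.eq_empty_iff_forall_notMem.mp hS r ⟨hr, hnj⟩
    obtain ⟨a, -, b, -, x', hx', y', hy', rfl⟩ := hIJR
    refine ⟨x', y', rfl, ?_, ?_⟩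
    · rwa [omega_mem hω (mem_of_getLast' hx')]
    · rwa [omega_mem hω (mem_of_head' hy')]
  have L1 : ∀ x y : A, [x, y] <:+: W → ¬ Zi [x, y] := by
    intro x y hxy hZi
    have hts : t x = s y := chain_of_pair hWpath.2 hxy
    have hPath : PathIn s t N [x, y] := by
      refine ⟨⟨by simp, by simp [hts, List.Chain']⟩, ?_⟩
      intro z hz
      have hzW : z ∈ W := hxy.sublist.subset hz
      exact hWN z hzW
    obtain ⟨r, hrR, hrinf⟩ := (hR.2.1 [x, y] hPath).mp hZi
    obtain ⟨x', y', rfl, hx', hy'⟩ := hRpair r hrR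
    have hreq : [x', y'] = [x, y] := hrinf.sublist.eq_of_length rfl
    obtain ⟨rfl, rfl⟩ : x = x' ∧ y = y' := by simpa using hreq.symm
    rcases pair_infix_flatten hpne hxy with ⟨p, hp, hin⟩ | ⟨U, p, q, Vl, hdec, hxp, hyq⟩
    · have hωp := (hmem_ws_N p hp x (hin.sublist.subset (by simp))).1
      rw [hωp] at hx'
      exact nodup_pair_last (hwsnodups p hp) hin hx'
    · obtain ⟨x2, hx2, y2, hy2, -, hnz⟩ := hjunc U p q Vl hdec
      rw [Option.mem_unique hx2 hxp, Option.mem_unique hy2 hyq] at hnz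
      exact hnz hZi
  have hnotZiW : ¬ Zi W := by
    intro hZiW
    obtain ⟨r, hrR, hrinf⟩ := (hR.2.1 W ⟨hWpath, hWN⟩).mp hZiW
    obtain ⟨x', y', rfl, -, -⟩ := hRpair r hrR
    exact L1 x' y' hrinf ((hR.1 _ hrR).2)
  have hpump : ∀ x ∈ W.getLast?, ∀ y ∈ W.head?, t x = s y → ¬ Zi [x, y] → False := by
    intro x hx y hy hts hnz
    obtain ⟨m, hm2, hmZ⟩ := hadm.2
    have hchP : (cyclePow W m).Chain' (fun a b => t a = s b) := by
      refine chain'_cyclePow hWne hWpath.2 ?_ m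
      intro x' hx' y' hy'
      rw [Option.mem_unique hx' hx, Option.mem_unique hy' hy]
      exact hts
    have hPne : cyclePow W m ≠ [] := cyclePow_ne_nil hWne (by omega)
    have hPpath : IsPath s t (cyclePow W m) := ⟨hPne, hchP⟩
    have hZiP : Zi (cyclePow W m) := by
      refine hmZ _ hPpath ?_
      rw [length_cyclePow]
      exact Nat.le_mul_of_pos_right m (List.length_pos_iff.mpr hWne)
    obtain ⟨r, hrR, hrinf⟩ :=
      (hR.2.1 _ ⟨hPpath, fun z hz => hWN z (mem_cyclePow hz)⟩).mp hZiP
    obtain ⟨x', y', rfl, -, -⟩ := hRpair r hrR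
    have hZir := (hR.1 _ hrR).2
    rcases pair_infix_cyclePow hWne hrinf with h | ⟨h1, h2⟩
    · exact L1 x' y' h hZir
    · rw [Option.mem_unique h1 hx, Option.mem_unique h2 hy] at hZir
      exact hnz hZir
  have step_pair : ∀ β γ : A, β ∈ N → γ ∈ N → t β = s γ → ¬ Zi [β, γ] → [β, γ] <:+: W := by
    intro β γ hβN hγN hts hnz
    have hpω : ω β ∈ ws := (hwsmem (ω β)).mpr ⟨β, hβN, rfl⟩
    obtain ⟨u, v, hβdec⟩ := List.append_of_mem (omega_self_mem hω β)
    have hpnd : (ω β).Nodup := omega_nodup hω β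
    have hpinfW : ω β <:+: W := List.infix_of_mem_flatten hpω
    cases v with
    | cons γ' v' =>
      have hpair : [β, γ'] <:+: ω β := ⟨u, v', by rw [hβdec]; simp⟩
      have hts' : t β = s γ' := chain_of_pair (omega_path hω β).2 hpair
      have hnz' : ¬ Zi [β, γ'] := L1 β γ' (hpair.trans hpinfW)
      have hγγ' : γ = γ' := (hsm β γ γ').1 ⟨hts, hnz⟩ ⟨hts', hnz'⟩
      rw [hγγ']
      exact hpair.trans hpinfW
    | nil =>
      have hβlast : β ∈ (ω β).getLast? := by rw [hβdec]; simp [List.getLast?_concat]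
      have hqω : ω γ ∈ ws := (hwsmem (ω γ)).mpr ⟨γ, hγN, rfl⟩
      obtain ⟨u2, v2, hγdec⟩ := List.append_of_mem (omega_self_mem hω γ)
      rcases List.eq_nil_or_concat u2 with rfl | ⟨u2', β', h22⟩
      · -- γ is the head of ω γ
        have hγhead : γ ∈ (ω γ).head? := by rw [hγdec]; simp
        obtain ⟨U, Vp, hwsdec⟩ := List.append_of_mem hpω
        cases Vp with
        | cons q' V' =>
          obtain ⟨x2, hx2, y2, hy2, hts2, hnz2⟩ := hjunc U (ω β) q' V' hwsdec
          rw [Option.mem_unique hx2 hβlast] at hts2 hnz2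
          have hγy2 : γ = y2 := (hsm β γ y2).1 ⟨hts, hnz⟩ ⟨hts2, hnz2⟩
          rw [← hγy2] at hy2
          have hq' : q' = γ :: q'.tail := List.eq_cons_of_mem_head? hy2
          refine ⟨U.flatten ++ u, q'.tail ++ V'.flatten, ?_⟩
          rw [hW, hwsdec, List.flatten_append, List.flatten_cons, List.flatten_cons,
            hβdec, hq']
          simp
        | nil =>
          have hβlastW : β ∈ W.getLast? := by
            rw [hW, hwsdec, List.flatten_append, List.flatten_cons, List.flatten_nil,
              List.append_nil, getLast?_append_ne_nil (hpne _ hpω)]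
            exact hβlast
          obtain ⟨U2, V2, hwsdec2⟩ := List.append_of_mem hqω
          rcases List.eq_nil_or_concat U2 with rfl | ⟨U2', p2, h32⟩
          · have hγheadW : γ ∈ W.head? := by
              rw [hW, hwsdec2, List.nil_append, List.flatten_cons,
                head?_append_ne_nil (hpne _ hqω)]
              exact hγhead
            exact absurd (hpump β hβlastW γ hγheadW hts hnz) (by simp)
          · rw [h32] at hwsdec2
            obtain ⟨x2, hx2, y2, hy2, hts2, hnz2⟩ :=
              hjunc U2' p2 (ω γ) V2 (by rw [hwsdec2]; simp)
            rw [Option.mem_unique hy2 hγhead] at hts2 hnz2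
            have hβx2 : β = x2 := (hsm γ β x2).2 ⟨hts, hnz⟩ ⟨hts2, hnz2⟩
            rw [← hβx2] at hx2
            have hp2 : ω β = p2 :=
              (hmem_ws_N p2 (by rw [hwsdec2]; simp) β (mem_of_getLast' hx2)).1
            exfalso
            refine nodup_pair_last hwsnd
              (⟨U2', V2, by rw [hwsdec2, hp2]; simp⟩ : [ω β, ω γ] <:+: ws) ?_
            rw [hwsdec, List.getLast?_concat]
            rfl
      · -- γ has a predecessor β' inside ω γ
        rw [h22] at hγdec
        have hpair : [β', γ] <:+: ω γ := ⟨u2', v2, by rw [hγdec]; simp⟩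
        have hts' : t β' = s γ := chain_of_pair (omega_path hω γ).2 hpair
        have hnz' : ¬ Zi [β', γ] := L1 β' γ (hpair.trans (List.infix_of_mem_flatten hqω))
        have hββ' : β = β' := (hsm γ β β').2 ⟨hts, hnz⟩ ⟨hts', hnz'⟩
        rw [← hββ'] at hpair
        exfalso
        have hβmem : β ∈ ω γ := hpair.sublist.subset (by simp)
        have hq_eq : ω β = ω γ := omega_mem hω hβmem
        exact nodup_pair_last hpnd (by rw [hq_eq]; exact hpair) hβlast
  have hWmax : MaxPathIn s t Zi N W := by
    refine ⟨⟨hWpath, hWN⟩, hnotZiW, ?_, ?_⟩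
    · intro α hαN hex
      obtain ⟨x, hx, hts⟩ := hex
      by_contra hnz
      have hWsplit : W.dropLast ++ [x] = W := List.dropLast_append_getLast? x hx
      have hinfix : [x, α] <:+: W ++ [α] := ⟨W.dropLast, [], by rw [← hWsplit]; simp⟩
      have hnzp : ¬ Zi [x, α] := fun h => hnz (hZ _ _ h hinfix)
      have hstep := step_pair x α (hWN x (mem_of_getLast' hx)) hαN hts hnzp
      exact nodup_pair_last hWnd hstep hx
    · intro α hαN hex
      obtain ⟨x, hx, hts⟩ := hex
      by_contra hnz
      have hinfix : [α, x] <:+: α :: W :=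
        ⟨[], W.tail, by rw [List.eq_cons_of_mem_head? hx]; simp⟩
      have hnzp : ¬ Zi [α, x] := fun h => hnz (hZ _ _ h hinfix)
      have hstep := step_pair α x hαN (hWN x (mem_of_head' hx)) hts hnzp
      exact nodup_pair_head hWnd hstep hx
  have huniq : ∀ m, MaxPathIn s t Zi N m → m = W := by
    intro m hm
    obtain ⟨⟨hmpath, hmN⟩, hmnZi, hmax1, hmax2⟩ := hm
    have hminf : m <:+: W := by
      refine chain_pairs_infix hWnd hmpath.1 ?_ ?_
      · intro x hx; exact hmemN_W x (hmN x hx)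
      · intro x y hxy
        have hts : t x = s y := chain_of_pair hmpath.2 hxy
        have hnz : ¬ Zi [x, y] := fun h => hmnZi (hZ _ _ h hxy)
        exact step_pair x y (hmN x (hxy.sublist.subset (by simp)))
          (hmN y (hxy.sublist.subset (by simp))) hts hnz
    obtain ⟨u', v', hmdec⟩ := hminf
    cases v' with
    | cons α v'' =>
      exfalso
      have hαN : α ∈ N := hWN α (by rw [← hmdec]; simp)
      obtain ⟨lm, hlm⟩ : ∃ l', l' ∈ m.getLast? :=
        ⟨m.getLast hmpath.1, List.getLast?_eq_getLast_of_ne_nil hmpath.1⟩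
      have hmsplit : m.dropLast ++ [lm] = m := List.dropLast_append_getLast? _ hlm
      have hts : t lm = s α := by
        refine chain_of_pair hWpath.2 ⟨u' ++ m.dropLast, v'', ?_⟩
        conv_rhs => rw [← hmdec, ← hmsplit]
        simp
      have hZext : Zi (m ++ [α]) := hmax1 α hαN ⟨_, hlm, hts⟩
      exact hnotZiW (hZ _ _ hZext ⟨u', v'', by rw [← hmdec]; simp⟩)
    | nil =>
      rcases List.eq_nil_or_concat u' with rfl | ⟨u0, α, h42⟩
      · simpa using hmdec
      · exfalso
        rw [h42] at hmdec
        have hαN : α ∈ N := hWN α (by rw [← hmdec]; simp)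
        obtain ⟨hd, hhd⟩ : ∃ h', h' ∈ m.head? := by
          cases hm0 : m with
          | nil => exact absurd hm0 hmpath.1
          | cons a l => exact ⟨a, rfl⟩
        have hmsplit : hd :: m.tail = m := (List.eq_cons_of_mem_head? hhd).symm
        have hts : t α = s hd := by
          refine chain_of_pair hWpath.2 ⟨u0, m.tail, ?_⟩
          conv_rhs => rw [← hmdec, ← hmsplit]
          simp
        have hZext : Zi (α :: m) := hmax2 α hαN ⟨_, hhd, hts⟩
        exact hnotZiW (hZ _ _ hZext ⟨u0, [], by rw [← hmdec]; simp⟩)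
  refine ⟨fun m => ⟨huniq m, ?_⟩, fun m m' hm hm' _ => (huniq m hm).trans (huniq m' hm').symm⟩
  rintro rfl
  exact hWmax

end UMPPaper
end
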